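/- Let n ∈ ℕ, let L ⊆ {1,…,n}, and for each i let f_i : ℝ → ℝ be globally Lipschitz with constant L_{pi} > 0 (i.e. |f_i(a) − f_i(b)| ≤ L_{pi}|a − b| for all a,b ∈ ℝ) when i ∈ L, and f_i = id with L_{pi} = 1 when i ∉ L. Let W = diag(L_{p1},…,L_{pn}), let A ∈ ℝ^{n×n}, B ∈ ℝ^{n×m}, and set Ã = W A. If there exists a symmetric positive definite matrix P ∈ ℝ^{n×n} with P_{ij} = P_{ji} = 0 for every i ∈ L and every j ≠ i, such that Ã^T P Ã − P is negative definite, then the discrete-time system x(k+1) = f(A x(k) + B u(k)) (f applied componentwise) is incrementally input-to-state stable (δISS). -/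

import Mathlib

open Matrix Filter

/-- Euclidean norm of a finitely-indexed real vector. -/
noncomputable def eNorm {ι : Type*} [Fintype ι] (v : ι → ℝ) : ℝ :=
  Real.sqrt (∑ i, (v i) ^ 2)

/-- Class `K` function: continuous and strictly increasing on `[0,∞)`, vanishing at `0`. -/
def IsKFun (γ : ℝ → ℝ) : Prop :=
  ContinuousOn γ (Set.Ici 0) ∧ StrictMonoOn γ (Set.Ici 0) ∧ γ 0 = 0

/-- Class `K∞` function: class `K` and unbounded. -/
def IsKInfFun (γ : ℝ → ℝ) : Prop :=
  IsKFun γ ∧ Tendsto γ atTop atTop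

/-- Class `KL` function. -/
def IsKLFun (β : ℝ → ℕ → ℝ) : Prop :=
  (∀ k, ContinuousOn (fun s => β s k) (Set.Ici 0)) ∧
  (∀ k, StrictMonoOn (fun s => β s k) (Set.Ici 0)) ∧
  (∀ k, β 0 k = 0) ∧
  (∀ s : ℝ, 0 < s → StrictAnti (fun k => β s k)) ∧
  (∀ s : ℝ, 0 < s → Tendsto (fun k => β s k) atTop (nhds 0))

/-- Solution of the discrete-time recursion `x(k+1) = F (x k) (u k)` from `x0`. -/
def traj {σ υ : Type*} (F : σ → υ → σ) (x0 : σ) (u : ℕ → υ) : ℕ → σ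
  | 0 => x0
  | k + 1 => F (traj F x0 u k) (u k)

/-- Incremental input-to-state stability (δISS) of `x(k+1) = F(x(k), u(k))`. -/
def DeltaISS {ι κ : Type*} [Fintype ι] [Fintype κ]
    (F : (ι → ℝ) → (κ → ℝ) → (ι → ℝ)) : Prop :=
  ∃ β : ℝ → ℕ → ℝ, ∃ γ : ℝ → ℝ, IsKLFun β ∧ IsKInfFun γ ∧
    ∀ (k : ℕ) (x01 x02 : ι → ℝ) (d : ℝ), 0 ≤ d →
      ∀ u1 u2 : ℕ → κ → ℝ, (∀ j, eNorm (u1 j - u2 j) ≤ d) →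
        eNorm (traj F x01 u1 k - traj F x02 u2 k) ≤ β (eNorm (x01 - x02)) k + γ d

section AuxLemmas

lemma eNorm_nonneg' {ι : Type*} [Fintype ι] (v : ι → ℝ) : 0 ≤ eNorm v :=
  Real.sqrt_nonneg _

lemma sq_eNorm' {ι : Type*} [Fintype ι] (v : ι → ℝ) : (eNorm v) ^ 2 = ∑ i, (v i) ^ 2 :=
  Real.sq_sqrt (by positivity)

/-- Frobenius norm of a real matrix. -/
noncomputable def frob {n m : ℕ} (M : Matrix (Fin n) (Fin m) ℝ) : ℝ :=
  Real.sqrt (∑ i, ∑ j, (M i j) ^ 2)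

lemma frob_nonneg' {n m : ℕ} (M : Matrix (Fin n) (Fin m) ℝ) : 0 ≤ frob M :=
  Real.sqrt_nonneg _

lemma dotProduct_le_eNorm {n : ℕ} (v w : Fin n → ℝ) : v ⬝ᵥ w ≤ eNorm v * eNorm w :=
  Real.sum_mul_le_sqrt_mul_sqrt _ _ _

lemma eNorm_mulVec_le {n m : ℕ} (M : Matrix (Fin n) (Fin m) ℝ) (v : Fin m → ℝ) :
    eNorm (M *ᵥ v) ≤ frob M * eNorm v := by
  rw [eNorm, frob, eNorm, ← Real.sqrt_mul (by positivity)]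
  apply Real.sqrt_le_sqrt
  rw [Finset.sum_mul]
  apply Finset.sum_le_sum
  intro i _
  calc (((M *ᵥ v) i)) ^ 2 = (∑ j, M i j * v j) ^ 2 := by
        simp [Matrix.mulVec, dotProduct]
    _ ≤ (∑ j, (M i j) ^ 2) * ∑ j, (v j) ^ 2 := Finset.sum_mul_sq_le_sq_mul_sq _ _ _

lemma bilin_symm {n : ℕ} (S : Matrix (Fin n) (Fin n) ℝ) (hS : Sᵀ = S) (v w : Fin n → ℝ) :
    v ⬝ᵥ (S *ᵥ w) = w ⬝ᵥ (S *ᵥ v) := by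
  rw [Matrix.dotProduct_mulVec, ← Matrix.vecMul_transpose, hS, dotProduct_comm]

lemma quad_expand {n : ℕ} (S : Matrix (Fin n) (Fin n) ℝ) (hS : Sᵀ = S) (v w : Fin n → ℝ) :
    (v + w) ⬝ᵥ (S *ᵥ (v + w)) =
      v ⬝ᵥ (S *ᵥ v) + 2 * (v ⬝ᵥ (S *ᵥ w)) + w ⬝ᵥ (S *ᵥ w) := by
  simp only [Matrix.mulVec_add, dotProduct_add, add_dotProduct,
    bilin_symm S hS w v]
  ring

lemma quad_smul {n : ℕ} (S : Matrix (Fin n) (Fin n) ℝ) (c : ℝ) (v : Fin n → ℝ) :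
    (c • v) ⬝ᵥ (S *ᵥ (c • v)) = c ^ 2 * (v ⬝ᵥ (S *ᵥ v)) := by
  rw [Matrix.mulVec_smul, smul_dotProduct, dotProduct_smul]
  simp [smul_eq_mul]; ring

lemma bilin_cs {n : ℕ} (S : Matrix (Fin n) (Fin n) ℝ) (hS : Sᵀ = S)
    (hpos : ∀ v : Fin n → ℝ, 0 ≤ v ⬝ᵥ (S *ᵥ v)) (v w : Fin n → ℝ) :
    v ⬝ᵥ (S *ᵥ w) ≤ Real.sqrt (v ⬝ᵥ (S *ᵥ v)) * Real.sqrt (w ⬝ᵥ (S *ᵥ w)) := by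
  have h : ∀ t : ℝ, 0 ≤ (w ⬝ᵥ (S *ᵥ w)) * (t * t) + (2 * (v ⬝ᵥ (S *ᵥ w))) * t + v ⬝ᵥ (S *ᵥ v) := by
    intro t
    have := hpos (v + t • w)
    rw [quad_expand S hS, quad_smul, Matrix.mulVec_smul, dotProduct_smul,
      smul_eq_mul] at this
    nlinarith [this]
  have hd := discrim_le_zero h
  rw [discrim] at hd
  have h1 : (v ⬝ᵥ (S *ᵥ w)) ^ 2 ≤ (v ⬝ᵥ (S *ᵥ v)) * (w ⬝ᵥ (S *ᵥ w)) := by nlinarith [hd]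
  calc v ⬝ᵥ (S *ᵥ w) ≤ Real.sqrt ((v ⬝ᵥ (S *ᵥ w)) ^ 2) := by
        rw [Real.sqrt_sq_eq_abs]; exact le_abs_self _
    _ ≤ Real.sqrt ((v ⬝ᵥ (S *ᵥ v)) * (w ⬝ᵥ (S *ᵥ w))) := Real.sqrt_le_sqrt h1
    _ = Real.sqrt (v ⬝ᵥ (S *ᵥ v)) * Real.sqrt (w ⬝ᵥ (S *ᵥ w)) := Real.sqrt_mul (hpos v) _

lemma quad_triangle {n : ℕ} (S : Matrix (Fin n) (Fin n) ℝ) (hS : Sᵀ = S)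
    (hpos : ∀ v : Fin n → ℝ, 0 ≤ v ⬝ᵥ (S *ᵥ v)) (v w : Fin n → ℝ) :
    Real.sqrt ((v + w) ⬝ᵥ (S *ᵥ (v + w))) ≤
      Real.sqrt (v ⬝ᵥ (S *ᵥ v)) + Real.sqrt (w ⬝ᵥ (S *ᵥ w)) := by
  have h : (v + w) ⬝ᵥ (S *ᵥ (v + w)) ≤
      (Real.sqrt (v ⬝ᵥ (S *ᵥ v)) + Real.sqrt (w ⬝ᵥ (S *ᵥ w))) ^ 2 := by
    rw [quad_expand S hS]
    have := bilin_cs S hS hpos v w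
    have h2 := Real.sq_sqrt (hpos v)
    have h3 := Real.sq_sqrt (hpos w)
    nlinarith
  calc Real.sqrt ((v + w) ⬝ᵥ (S *ᵥ (v + w)))
      ≤ Real.sqrt ((Real.sqrt (v ⬝ᵥ (S *ᵥ v)) + Real.sqrt (w ⬝ᵥ (S *ᵥ w))) ^ 2) :=
        Real.sqrt_le_sqrt h
    _ = _ := Real.sqrt_sq (by positivity)

/-- Pull-through identity for quadratic forms. -/
lemma quad_conj {n : ℕ} (S : Matrix (Fin n) (Fin n) ℝ) (M : Matrix (Fin n) (Fin n) ℝ)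
    (v : Fin n → ℝ) :
    (M *ᵥ v) ⬝ᵥ (S *ᵥ (M *ᵥ v)) = v ⬝ᵥ ((Mᵀ * S * M) *ᵥ v) := by
  rw [← Matrix.mulVec_mulVec, ← Matrix.mulVec_mulVec, Matrix.dotProduct_mulVec (v := v),
    Matrix.vecMul_transpose]

lemma eNorm_eq_norm {n : ℕ} (v : EuclideanSpace ℝ (Fin n)) :
    eNorm (fun i => v i) = ‖v‖ := by
  rw [EuclideanSpace.norm_eq, eNorm]
  congr 1
  refine Finset.sum_congr rfl fun i _ => ?_
  rw [Real.norm_eq_abs, sq_abs]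

/-- Uniform lower bound for a positive definite quadratic form (compactness). -/
lemma posdef_lower {n : ℕ} (S : Matrix (Fin n) (Fin n) ℝ)
    (h : ∀ v : Fin n → ℝ, v ≠ 0 → 0 < v ⬝ᵥ (S *ᵥ v)) :
    ∃ α : ℝ, 0 < α ∧ ∀ v : Fin n → ℝ, α * (eNorm v) ^ 2 ≤ v ⬝ᵥ (S *ᵥ v) := by
  rcases Nat.eq_zero_or_pos n with hn | hn
  · refine ⟨1, one_pos, fun v => ?_⟩
    subst hn
    simp [eNorm, dotProduct]
  · set E := EuclideanSpace ℝ (Fin n)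
    have hg : Continuous fun x : E => (fun i => x i) ⬝ᵥ (S *ᵥ (fun i => x i)) := by
      have hc : ∀ i : Fin n, Continuous fun x : E => x i := fun i =>
        (EuclideanSpace.proj i).continuous
      simp only [dotProduct, Matrix.mulVec]
      exact continuous_finset_sum _ fun i _ => (hc i).mul
        (continuous_finset_sum _ fun j _ => continuous_const.mul (hc j))
    have hne : (Metric.sphere (0 : E) 1).Nonempty := by
      refine ⟨EuclideanSpace.single ⟨0, hn⟩ (1:ℝ), ?_⟩
      simp only [Metric.mem_sphere, dist_zero_right]
      rw [EuclideanSpace.norm_single]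
      norm_num
    obtain ⟨v0, hv0mem, hv0min'⟩ :=
      (isCompact_sphere (0 : E) 1).exists_isMinOn hne hg.continuousOn
    have hv0min := isMinOn_iff.mp hv0min'
    have hv0norm : ‖v0‖ = 1 := by simpa using hv0mem
    have hv0ne : (fun i => v0 i) ≠ (0 : Fin n → ℝ) := by
      intro hz
      have : v0 = 0 := by
        ext i
        exact congrFun hz i
      rw [this] at hv0norm
      simp at hv0norm
    refine ⟨_, h _ hv0ne, fun v => ?_⟩
    by_cases hv : v = 0
    · simp [hv, eNorm, dotProduct]
    · set w : E := (eNorm v)⁻¹ • (WithLp.toLp 2 v) with hw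
      have hvnorm : eNorm v = ‖(WithLp.toLp 2 v)‖ := eNorm_eq_norm _
      have hvpos : 0 < eNorm v := by
        rw [hvnorm]
        refine norm_pos_iff.mpr ?_
        intro hz
        apply hv
        ext i
        exact congrFun (congrArg (fun x : E => (fun i => x i)) hz) i
      have hwmem : w ∈ Metric.sphere (0 : E) 1 := by
        simp only [Metric.mem_sphere, dist_zero_right, hw, norm_smul]
        rw [← hvnorm]
        simp [abs_of_pos hvpos, inv_mul_cancel₀ (ne_of_gt hvpos)]
      have hle := hv0min w hwmem
      have hwfun : (fun i => w i) = (eNorm v)⁻¹ • v := rfl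
      have hQw : (fun i => w i) ⬝ᵥ (S *ᵥ (fun i => w i)) =
          ((eNorm v)⁻¹) ^ 2 * (v ⬝ᵥ (S *ᵥ v)) := by
        rw [hwfun, quad_smul]
      rw [hQw] at hle
      have hmul := mul_le_mul_of_nonneg_right hle
        (le_of_lt (by positivity : (0:ℝ) < (eNorm v) ^ 2))
      calc (fun i => v0 i) ⬝ᵥ (S *ᵥ fun i => v0 i) * eNorm v ^ 2 ≤
          (eNorm v)⁻¹ ^ 2 * (v ⬝ᵥ (S *ᵥ v)) * eNorm v ^ 2 := hmul
        _ = v ⬝ᵥ (S *ᵥ v) := by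
            field_simp

/-- Structured monotonicity of the quadratic form. -/
lemma quad_mono {n : ℕ} (L : Finset (Fin n)) (P : Matrix (Fin n) (Fin n) ℝ)
    (hPstruct : ∀ i ∈ L, ∀ j : Fin n, j ≠ i → P i j = 0 ∧ P j i = 0)
    (hdiag : ∀ i ∈ L, 0 ≤ P i i)
    (a b : Fin n → ℝ) (hL : ∀ i ∈ L, (a i) ^ 2 ≤ (b i) ^ 2)
    (hnL : ∀ i ∉ L, a i = b i) :
    a ⬝ᵥ (P *ᵥ a) ≤ b ⬝ᵥ (P *ᵥ b) := by
  have key : ∀ x : Fin n → ℝ, x ⬝ᵥ (P *ᵥ x) =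
      (∑ i ∈ L, P i i * (x i) ^ 2) + ∑ i ∈ Lᶜ, ∑ j ∈ Lᶜ, x i * (P i j * x j) := by
    intro x
    have expand : x ⬝ᵥ (P *ᵥ x) = ∑ i, ∑ j, x i * (P i j * x j) := by
      simp only [dotProduct, Matrix.mulVec, Finset.mul_sum]
    rw [expand, ← Finset.sum_add_sum_compl L]
    congr 1
    · refine Finset.sum_congr rfl fun i hi => ?_
      rw [Finset.sum_eq_single_of_mem i (Finset.mem_univ i)
        (fun j _ hj => by rw [(hPstruct i hi j hj).1]; ring)]
      ring
    · refine Finset.sum_congr rfl fun i hi => ?_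
      rw [← Finset.sum_add_sum_compl L (fun j => x i * (P i j * x j))]
      have hzero : ∑ j ∈ L, x i * (P i j * x j) = 0 := by
        refine Finset.sum_eq_zero fun j hj => ?_
        have hij : i ≠ j := fun hij => (Finset.mem_compl.mp hi) (hij ▸ hj)
        rw [(hPstruct j hj i hij).2]
        ring
      rw [hzero, zero_add]
  rw [key a, key b]
  have h1 : ∑ i ∈ L, P i i * (a i) ^ 2 ≤ ∑ i ∈ L, P i i * (b i) ^ 2 :=
    Finset.sum_le_sum fun i hi => mul_le_mul_of_nonneg_left (hL i hi) (hdiag i hi)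
  have h2 : ∑ i ∈ Lᶜ, ∑ j ∈ Lᶜ, a i * (P i j * a j) =
      ∑ i ∈ Lᶜ, ∑ j ∈ Lᶜ, b i * (P i j * b j) := by
    refine Finset.sum_congr rfl fun i hi => Finset.sum_congr rfl fun j hj => ?_
    rw [hnL i (Finset.mem_compl.mp hi), hnL j (Finset.mem_compl.mp hj)]
  rw [h2]
  exact add_le_add_left h1 _

end AuxLemmas

theorem deltaISS_of_structured_lyapunov
    (n m : ℕ) (L : Finset (Fin n)) (f : Fin n → ℝ → ℝ) (Lp : Fin n → ℝ)
    (hLip : ∀ i ∈ L, 0 < Lp i ∧ ∀ a b : ℝ, |f i a - f i b| ≤ Lp i * |a - b|)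
    (hid : ∀ i ∉ L, f i = id ∧ Lp i = 1)
    (A : Matrix (Fin n) (Fin n) ℝ) (B : Matrix (Fin n) (Fin m) ℝ)
    (P : Matrix (Fin n) (Fin n) ℝ)
    (hPsym : Pᵀ = P)
    (hPpos : ∀ v : Fin n → ℝ, v ≠ 0 → 0 < v ⬝ᵥ (P *ᵥ v))
    (hPstruct : ∀ i ∈ L, ∀ j : Fin n, j ≠ i → P i j = 0 ∧ P j i = 0)
    (hNeg : ∀ v : Fin n → ℝ, v ≠ 0 →
      v ⬝ᵥ (((Matrix.diagonal Lp * A)ᵀ * P * (Matrix.diagonal Lp * A) - P) *ᵥ v) < 0) :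
    DeltaISS (fun x u => fun i => f i ((A *ᵥ x + B *ᵥ u) i)) := by
  classical
  set F : (Fin n → ℝ) → (Fin m → ℝ) → (Fin n → ℝ) :=
    fun x u => fun i => f i ((A *ᵥ x + B *ᵥ u) i) with hF
  set W : Matrix (Fin n) (Fin n) ℝ := Matrix.diagonal Lp with hW
  set At : Matrix (Fin n) (Fin n) ℝ := W * A with hAt
  set G : Matrix (Fin n) (Fin m) ℝ := W * B with hG
  -- notation for the P-quadratic form and P-norm
  set Q : (Fin n → ℝ) → ℝ := fun v => v ⬝ᵥ (P *ᵥ v) with hQ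
  set NP : (Fin n → ℝ) → ℝ := fun v => Real.sqrt (Q v) with hNP
  have hPnn : ∀ v : Fin n → ℝ, 0 ≤ Q v := fun v => by
    by_cases hv : v = 0
    · simp [hQ, hv]
    · exact (hPpos v hv).le
  have hdiag : ∀ i ∈ L, 0 ≤ P i i := by
    intro i hi
    have h1 : (Pi.single i (1:ℝ) : Fin n → ℝ) ≠ 0 := by
      intro h
      have := congrFun h i
      simp at this
    have h2 := hPpos _ h1
    have heq : (Pi.single i (1:ℝ) : Fin n → ℝ) ⬝ᵥ (P *ᵥ (Pi.single i (1:ℝ) : Fin n → ℝ)) = P i i := by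
      simp [dotProduct, Matrix.mulVec, Pi.single_apply]
    rw [heq] at h2
    exact h2.le
  obtain ⟨α0, hα0, hlow⟩ := posdef_lower P hPpos
  obtain ⟨α1, hα1, hlow1⟩ := posdef_lower (P - Atᵀ * P * At) (by
    intro v hv
    have h := hNeg v hv
    rw [Matrix.sub_mulVec, dotProduct_sub] at h ⊢
    linarith)
  set M0 : ℝ := frob P + 1 with hM0
  have hM0pos : 0 < M0 := by
    have := frob_nonneg' P
    simp only [hM0]; linarith
  have hupper : ∀ v : Fin n → ℝ, Q v ≤ M0 * (eNorm v) ^ 2 := by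
    intro v
    have h1 : Q v ≤ eNorm v * eNorm (P *ᵥ v) := dotProduct_le_eNorm _ _
    have h2 : eNorm (P *ᵥ v) ≤ frob P * eNorm v := eNorm_mulVec_le P v
    have h3 := eNorm_nonneg' v
    have h4 := frob_nonneg' P
    nlinarith
  set r : ℝ := max (1 - α1 / M0) (1/2 : ℝ) with hr
  have hr0 : 0 < r := lt_of_lt_of_le one_half_pos (le_max_right _ _)
  have hr1 : r < 1 := max_lt (by
    have : 0 < α1 / M0 := div_pos hα1 hM0pos
    linarith) (by norm_num)
  have hcontr : ∀ v : Fin n → ℝ, Q (At *ᵥ v) ≤ r * Q v := by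
    intro v
    have hid1 : Q (At *ᵥ v) = v ⬝ᵥ ((Atᵀ * P * At) *ᵥ v) := quad_conj P At v
    have hd : v ⬝ᵥ ((Atᵀ * P * At) *ᵥ v) = Q v - v ⬝ᵥ ((P - Atᵀ * P * At) *ᵥ v) := by
      rw [Matrix.sub_mulVec, dotProduct_sub]
      simp only [hQ]
      ring
    have h1 : α1 * (eNorm v) ^ 2 ≤ v ⬝ᵥ ((P - Atᵀ * P * At) *ᵥ v) := hlow1 v
    have h2 : Q v ≤ M0 * (eNorm v) ^ 2 := hupper v
    have h3 : (1 - α1 / M0) * Q v ≤ r * Q v :=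
      mul_le_mul_of_nonneg_right (le_max_left _ _) (hPnn v)
    have hdiv : α1 / M0 * Q v ≤ α1 * (eNorm v) ^ 2 := by
      rw [div_mul_eq_mul_div, div_le_iff₀ hM0pos]
      nlinarith
    rw [hid1, hd]
    nlinarith
  set ρ : ℝ := Real.sqrt r with hρ
  have hρ0 : 0 < ρ := Real.sqrt_pos.mpr hr0
  have hρ1 : ρ < 1 := by
    rw [hρ, show (1:ℝ) = Real.sqrt 1 by simp]
    exact Real.sqrt_lt_sqrt hr0.le hr1
  have hNcontr : ∀ v : Fin n → ℝ, NP (At *ᵥ v) ≤ ρ * NP v := by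
    intro v
    simp only [hNP, hρ]
    rw [← Real.sqrt_mul hr0.le]
    exact Real.sqrt_le_sqrt (hcontr v)
  have hNle : ∀ v : Fin n → ℝ, NP v ≤ Real.sqrt M0 * eNorm v := by
    intro v
    simp only [hNP]
    calc Real.sqrt (Q v) ≤ Real.sqrt (M0 * (eNorm v) ^ 2) := Real.sqrt_le_sqrt (hupper v)
      _ = Real.sqrt M0 * eNorm v := by
          rw [Real.sqrt_mul hM0pos.le, Real.sqrt_sq (eNorm_nonneg' v)]
  have hNge : ∀ v : Fin n → ℝ, Real.sqrt α0 * eNorm v ≤ NP v := by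
    intro v
    simp only [hNP]
    calc Real.sqrt α0 * eNorm v = Real.sqrt (α0 * (eNorm v) ^ 2) := by
          rw [Real.sqrt_mul hα0.le, Real.sqrt_sq (eNorm_nonneg' v)]
      _ ≤ Real.sqrt (Q v) := Real.sqrt_le_sqrt (hlow v)
  set Cu : ℝ := Real.sqrt M0 * frob G with hCu
  have hCu0 : 0 ≤ Cu := mul_nonneg (Real.sqrt_nonneg _) (frob_nonneg' _)
  -- one step estimate
  have hstep : ∀ (x1 x2 : Fin n → ℝ) (w1 w2 : Fin m → ℝ),
      NP (F x1 w1 - F x2 w2) ≤ ρ * NP (x1 - x2) + Cu * eNorm (w1 - w2) := by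
    intro x1 x2 w1 w2
    set e : Fin n → ℝ := x1 - x2 with he
    set du : Fin m → ℝ := w1 - w2 with hdu
    set z : Fin n → ℝ := A *ᵥ e + B *ᵥ du with hz
    set b : Fin n → ℝ := At *ᵥ e + G *ᵥ du with hbb
    have hbz : b = W *ᵥ z := by
      rw [hbb, hz, Matrix.mulVec_add, hAt, hG, ← Matrix.mulVec_mulVec, ← Matrix.mulVec_mulVec]
    have hbi : ∀ i, b i = Lp i * z i := by
      intro i
      rw [hbz, hW]
      exact Matrix.mulVec_diagonal Lp z i
    have hzi : ∀ i, (A *ᵥ x1 + B *ᵥ w1) i - (A *ᵥ x2 + B *ᵥ w2) i = z i := by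
      intro i
      have hvec : (A *ᵥ x1 + B *ᵥ w1) - (A *ᵥ x2 + B *ᵥ w2) = z := by
        rw [hz, he, hdu, Matrix.mulVec_sub, Matrix.mulVec_sub]
        abel
      exact congrFun hvec i
    set e' : Fin n → ℝ := F x1 w1 - F x2 w2 with he'
    have hcompL : ∀ i ∈ L, (e' i) ^ 2 ≤ (b i) ^ 2 := by
      intro i hi
      have habs : |e' i| ≤ |b i| := by
        have h1 : e' i = f i ((A *ᵥ x1 + B *ᵥ w1) i) - f i ((A *ᵥ x2 + B *ᵥ w2) i) := rfl
        have h2 := (hLip i hi).2 ((A *ᵥ x1 + B *ᵥ w1) i) ((A *ᵥ x2 + B *ᵥ w2) i)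
        rw [hzi i] at h2
        rw [h1]
        calc |f i ((A *ᵥ x1 + B *ᵥ w1) i) - f i ((A *ᵥ x2 + B *ᵥ w2) i)|
            ≤ Lp i * |z i| := h2
          _ = |Lp i * z i| := by
              rw [abs_mul, abs_of_pos (hLip i hi).1]
          _ = |b i| := by rw [hbi i]
      calc (e' i) ^ 2 = |e' i| ^ 2 := (sq_abs _).symm
        _ ≤ |b i| ^ 2 := by
            apply pow_le_pow_left₀ (abs_nonneg _) habs
        _ = (b i) ^ 2 := sq_abs _
    have hcompN : ∀ i ∉ L, e' i = b i := by
      intro i hi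
      have h1 : e' i = f i ((A *ᵥ x1 + B *ᵥ w1) i) - f i ((A *ᵥ x2 + B *ᵥ w2) i) := rfl
      rw [h1, (hid i hi).1]
      simp only [id]
      rw [hzi i, hbi i, (hid i hi).2, one_mul]
    have hQle : Q e' ≤ Q b := quad_mono L P hPstruct hdiag e' b hcompL hcompN
    have hNPle : NP e' ≤ NP b := by
      simp only [hNP]
      exact Real.sqrt_le_sqrt hQle
    have htri : NP b ≤ NP (At *ᵥ e) + NP (G *ᵥ du) := by
      simp only [hNP, hbb]
      exact quad_triangle P hPsym hPnn _ _
    have hterm2 : NP (G *ᵥ du) ≤ Cu * eNorm du := by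
      calc NP (G *ᵥ du) ≤ Real.sqrt M0 * eNorm (G *ᵥ du) := hNle _
        _ ≤ Real.sqrt M0 * (frob G * eNorm du) :=
            mul_le_mul_of_nonneg_left (eNorm_mulVec_le G du) (Real.sqrt_nonneg _)
        _ = Cu * eNorm du := by rw [hCu]; ring
    calc NP (F x1 w1 - F x2 w2) = NP e' := rfl
      _ ≤ NP b := hNPle
      _ ≤ NP (At *ᵥ e) + NP (G *ᵥ du) := htri
      _ ≤ ρ * NP e + Cu * eNorm du := add_le_add (hNcontr e) hterm2
  set K : ℝ := Cu / (1 - ρ) with hK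
  have hK0 : 0 ≤ K := div_nonneg hCu0 (by linarith)
  have h1ρ : (1:ℝ) - ρ ≠ 0 := ne_of_gt (by linarith)
  have hKρ : ρ * K + Cu = K := by
    rw [hK]
    field_simp
    ring
  -- the iteration
  have hiter : ∀ (x01 x02 : Fin n → ℝ) (d : ℝ), 0 ≤ d →
      ∀ u1 u2 : ℕ → Fin m → ℝ, (∀ j, eNorm (u1 j - u2 j) ≤ d) →
      ∀ k : ℕ, NP (traj F x01 u1 k - traj F x02 u2 k) ≤ ρ ^ k * NP (x01 - x02) + K * d := by
    intro x01 x02 d hd u1 u2 hu k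
    induction k with
    | zero =>
        simp only [traj, pow_zero, one_mul]
        have := mul_nonneg hK0 hd
        linarith
    | succ k ih =>
        have hstep' := hstep (traj F x01 u1 k) (traj F x02 u2 k) (u1 k) (u2 k)
        have hu' := hu k
        calc NP (traj F x01 u1 (k+1) - traj F x02 u2 (k+1))
            = NP (F (traj F x01 u1 k) (u1 k) - F (traj F x02 u2 k) (u2 k)) := rfl
          _ ≤ ρ * NP (traj F x01 u1 k - traj F x02 u2 k) + Cu * eNorm (u1 k - u2 k) := hstep'
          _ ≤ ρ * (ρ ^ k * NP (x01 - x02) + K * d) + Cu * d := by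
              have h1 : Cu * eNorm (u1 k - u2 k) ≤ Cu * d :=
                mul_le_mul_of_nonneg_left hu' hCu0
              have h2 : ρ * NP (traj F x01 u1 k - traj F x02 u2 k) ≤
                  ρ * (ρ ^ k * NP (x01 - x02) + K * d) :=
                mul_le_mul_of_nonneg_left ih hρ0.le
              linarith
          _ = ρ ^ (k+1) * NP (x01 - x02) + (ρ * K + Cu) * d := by ring
          _ = ρ ^ (k+1) * NP (x01 - x02) + K * d := by rw [hKρ]
  -- the comparison functions
  set sα : ℝ := Real.sqrt α0 with hsα
  have hsα0 : 0 < sα := Real.sqrt_pos.mpr hα0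
  set c1 : ℝ := Real.sqrt M0 / sα with hc1
  have hc1pos : 0 < c1 := div_pos (Real.sqrt_pos.mpr hM0pos) hsα0
  set c2 : ℝ := K / sα + 1 with hc2
  have hc2pos : 0 < c2 := by
    have h0 : 0 ≤ K / sα := div_nonneg hK0 hsα0.le
    rw [hc2]
    linarith
  refine ⟨fun s k => c1 * ρ ^ k * s, fun d => c2 * d, ?_, ?_, ?_⟩
  · -- IsKLFun
    refine ⟨fun k => (continuous_const.mul continuous_id).continuousOn, fun k => ?_, fun k => by simp,
      fun s hs => ?_, fun s hs => ?_⟩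
    · intro a _ b _ hab
      have hpos : 0 < c1 * ρ ^ k := mul_pos hc1pos (pow_pos hρ0 k)
      exact mul_lt_mul_of_pos_left hab hpos
    · intro k l hkl
      have h1 : ρ ^ l < ρ ^ k := pow_lt_pow_right_of_lt_one₀ hρ0 hρ1 hkl
      have h2 : 0 < c1 * s := mul_pos hc1pos hs
      simp only
      nlinarith
    · have h1 : Tendsto (fun k : ℕ => ρ ^ k) atTop (nhds 0) :=
        tendsto_pow_atTop_nhds_zero_of_lt_one hρ0.le hρ1
      have h2 : Tendsto (fun k : ℕ => c1 * ρ ^ k * s) atTop (nhds (c1 * 0 * s)) :=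
        (h1.const_mul c1).mul_const s
      simpa using h2
  · -- IsKInfFun
    refine ⟨⟨(continuous_const.mul continuous_id).continuousOn, ?_, by simp⟩, ?_⟩
    · intro a _ b _ hab
      exact mul_lt_mul_of_pos_left hab hc2pos
    · exact Tendsto.const_mul_atTop hc2pos tendsto_id
  · -- the main estimate
    intro k x01 x02 d hd u1 u2 hu
    have h1 := hNge (traj F x01 u1 k - traj F x02 u2 k)
    have h2 := hiter x01 x02 d hd u1 u2 hu k
    have h3 := hNle (x01 - x02)
    have hρk : (0:ℝ) < ρ ^ k := pow_pos hρ0 k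
    have hgoal : sα * eNorm (traj F x01 u1 k - traj F x02 u2 k) ≤
        sα * (c1 * ρ ^ k * eNorm (x01 - x02) + c2 * d) := by
      have key : sα * (c1 * ρ ^ k * eNorm (x01 - x02) + c2 * d) =
          Real.sqrt M0 * (ρ ^ k * eNorm (x01 - x02)) + (K + sα) * d := by
        have hsαne : sα ≠ 0 := ne_of_gt hsα0
        rw [hc1, hc2]
        field_simp
      rw [key]
      have h4 : ρ ^ k * NP (x01 - x02) ≤ ρ ^ k * (Real.sqrt M0 * eNorm (x01 - x02)) :=
        mul_le_mul_of_nonneg_left h3 hρk.le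
      have h5 : 0 ≤ sα * d := mul_nonneg hsα0.le hd
      have h6 : ρ ^ k * (Real.sqrt M0 * eNorm (x01 - x02)) =
          Real.sqrt M0 * (ρ ^ k * eNorm (x01 - x02)) := by ring
      linarith [h1, h2, h4, h5, h6.le, h6.ge]
    exact le_of_mul_le_mul_left hgoal hsα0
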